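/- If g(t) = Σ_{i=1}^{r} c_i λ_i^{t−1} for all t ≥ 1, where c₁, …, c_r > 0 and λ₁ > λ₂ > … > λ_r > 0, then the Hankel matrix H(g) is totally positive and has rank exactly r; moreover every minor of H(g) of order at most r taken from rows i₁ < … < i_p and columns j₁ < … < j_p is strictly positive. -/

import Mathlib

open Matrix

/-- The square submatrix of the infinite Hankel matrix `H(g)_{i,j} = g(i+j-1)`
(`i,j ≥ 1`) obtained from rows `ρ` and columns `c`.  Here the sequence is
indexed from `0`, i.e. `g t` stands for the value of the impulse response at
time `t + 1`, so that `H(g)` has `(i,j)`-entry `g (i + j)` for `i, j ≥ 0`. -/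
def hankelSub (g : ℕ → ℝ) {p : ℕ} (ρ c : Fin p → ℕ) : Matrix (Fin p) (Fin p) ℝ :=
  Matrix.of fun i j => g (ρ i + c j)

/-- The infinite Hankel matrix `H(g)` is totally positive: every minor of every
finite submatrix is nonnegative. -/
def HankelTotallyPositive (g : ℕ → ℝ) : Prop :=
  ∀ (p : ℕ) (ρ c : Fin p → ℕ), StrictMono ρ → StrictMono c →
    0 ≤ (hankelSub g ρ c).det

/-- The infinite Hankel matrix `H(g)` has rank exactly `r`: all of its finite
submatrices have rank at most `r` and some finite submatrix has rank `r`. -/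
def HankelRankEq (g : ℕ → ℝ) (r : ℕ) : Prop :=
  (∀ (p : ℕ) (ρ c : Fin p → ℕ), (hankelSub g ρ c).rank ≤ r) ∧
  (∃ ρ c : Fin r → ℕ, (hankelSub g ρ c).rank = r)

/-- A nonzero "exponential polynomial" `∑ aᵢ x^{tᵢ}` with `k` nonzero terms
cannot have `k` distinct positive roots. -/
lemma aux_no_roots : ∀ (k : ℕ) (a t : Fin k → ℝ), (∀ i, a i ≠ 0) → StrictMono t →
    ∀ x : Fin k → ℝ, StrictMono x → (∀ j, 0 < x j) →
    (∀ j, ∑ i, a i * x j ^ t i = 0) → k = 0 := by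
  intro k
  induction k with
  | zero => intros; rfl
  | succ k ih =>
    intro a t ha ht x hx hxp hroot
    exfalso
    set F : ℝ → ℝ := fun y => ∑ i, a i * y ^ (t i - t 0) with hF
    have hFroot : ∀ j, F (x j) = 0 := by
      intro j
      have h1 : F (x j) = (∑ i, a i * x j ^ t i) / x j ^ t 0 := by
        rw [Finset.sum_div]
        refine Finset.sum_congr rfl fun i _ => ?_
        rw [Real.rpow_sub (hxp j), mul_div_assoc]
      rw [h1, hroot j, zero_div]
    have hderiv : ∀ y : ℝ, 0 < y →
        HasDerivAt F (∑ i, a i * ((t i - t 0) * y ^ (t i - t 0 - 1))) y := by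
      intro y hy
      exact HasDerivAt.fun_sum fun i _ =>
        ((Real.hasDerivAt_rpow_const (Or.inl hy.ne')).const_mul (a i))
    have key : ∀ j : Fin k, ∃ y, x j.castSucc < y ∧ y < x j.succ ∧
        (∑ i, a i * ((t i - t 0) * y ^ (t i - t 0 - 1))) = 0 := by
      intro j
      have hab : x j.castSucc < x j.succ := hx (Fin.castSucc_lt_succ (i := j))
      have hcont : ContinuousOn F (Set.Icc (x j.castSucc) (x j.succ)) := by
        intro y hy
        have hy0 : 0 < y := lt_of_lt_of_le (hxp _) hy.1
        exact ((hderiv y hy0).continuousAt).continuousWithinAt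
      obtain ⟨z, hz, hz0⟩ := exists_hasDerivAt_eq_zero hab hcont
        (by rw [hFroot, hFroot])
        (fun y hy => hderiv y (lt_trans (hxp _) hy.1))
      exact ⟨z, hz.1, hz.2, hz0⟩
    choose y hy1 hy2 hy0 using key
    have hIH : k = 0 := by
      refine ih (fun i => a i.succ * (t i.succ - t 0)) (fun i => t i.succ - t 0 - 1)
        (fun i => mul_ne_zero (ha _) (sub_ne_zero.mpr (ht (Fin.succ_pos i)).ne'))
        (fun i j hij => by have := ht (Fin.succ_lt_succ_iff.mpr hij); dsimp only; linarith)
        y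
        (fun i j hij => ?_) (fun j => lt_trans (hxp _) (hy1 j)) (fun j => ?_)
      · calc y i < x i.succ := hy2 i
          _ ≤ x j.castSucc := hx.monotone (by
              have : (i : ℕ) < (j : ℕ) := hij
              simp [Fin.le_def]; omega)
          _ < y j := hy1 j
      · have h0 := hy0 j
        rw [Fin.sum_univ_succ] at h0
        simp only [sub_self, zero_mul, mul_zero, zero_add] at h0
        rw [← h0]
        refine Finset.sum_congr rfl fun i _ => by ring
    subst hIH
    have h1 := hroot 0
    rw [Fin.sum_univ_one] at h1
    exact (mul_ne_zero (ha 0) (Real.rpow_pos_of_pos (hxp 0) _).ne') h1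


/-- A generalized Vandermonde matrix with positive increasing nodes and real
exponents has nonzero determinant. -/
lemma aux_det_ne_zero {p : ℕ} (x : Fin p → ℝ) (hx : StrictMono x) (hxp : ∀ j, 0 < x j)
    (t : Fin p → ℝ) (ht : StrictMono t) :
    (Matrix.of fun i j : Fin p => x j ^ t i).det ≠ 0 := by
  intro hdet
  classical
  have hdet' : (Matrix.of fun i j : Fin p => x j ^ t i)ᵀ.det = 0 := by
    rwa [Matrix.det_transpose]
  obtain ⟨a, ha0, hav⟩ := (Matrix.exists_mulVec_eq_zero_iff).mpr hdet'
  set s : Finset (Fin p) := Finset.univ.filter (fun i => a i ≠ 0) with hs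
  have hsne : s.Nonempty := by
    obtain ⟨i, hi⟩ := Function.ne_iff.mp ha0
    exact ⟨i, by simp [hs]; exact hi⟩
  have hkp : s.card ≤ p := le_trans (Finset.card_le_univ s) (by simp)
  set iso := s.orderIsoOfFin rfl with hiso
  have hzero := aux_no_roots s.card (fun i => a (iso i)) (fun i => t (iso i))
    (fun i => (Finset.mem_filter.mp (iso i).2).2)
    (fun i j hij => ht (iso.strictMono hij))
    (fun j => x (Fin.castLE hkp j))
    (fun i j hij => hx (by simp only [Fin.lt_def, Fin.coe_castLE]; exact hij))
    (fun j => hxp _)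
    ?_
  · exact absurd (Finset.card_eq_zero.mp hzero) hsne.ne_empty
  · intro j
    have hmv := congrFun hav (Fin.castLE hkp j)
    have hmv' : ∑ i, x (Fin.castLE hkp j) ^ t i * a i = 0 := hmv
    calc ∑ i, a (iso i) * x (Fin.castLE hkp j) ^ t (iso i)
        = ∑ i : s, a i * x (Fin.castLE hkp j) ^ t i :=
          Fintype.sum_equiv iso.toEquiv _ _ (fun i => rfl)
      _ = ∑ i ∈ s, a i * x (Fin.castLE hkp j) ^ t i :=
          Finset.sum_coe_sort s (fun i : Fin p => a i * x (Fin.castLE hkp j) ^ t i)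
      _ = ∑ i, a i * x (Fin.castLE hkp j) ^ t i := by
          refine Finset.sum_subset (Finset.subset_univ _) (fun i _ hi => ?_)
          have : a i = 0 := by by_contra h; exact hi (by simp [hs]; exact h)
          rw [this, zero_mul]
      _ = 0 := by rw [← hmv']; exact Finset.sum_congr rfl fun i _ => mul_comm _ _

/-- Generalized Vandermonde determinants with positive increasing nodes and
strictly increasing natural exponents are strictly positive. -/
lemma aux_det_pos {p : ℕ} (x : Fin p → ℝ) (hx : StrictMono x) (hxp : ∀ j, 0 < x j)
    (e : Fin p → ℕ) (he : StrictMono e) :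
    0 < (Matrix.of fun i j : Fin p => x j ^ e i).det := by
  by_contra hle
  push_neg at hle
  set D : (Fin p → ℝ) → ℝ := fun t => (Matrix.of fun i j : Fin p => x j ^ t i).det with hD
  have hcont : Continuous D := by
    apply Continuous.matrix_det
    apply continuous_pi; intro i; apply continuous_pi; intro j
    have hrw : (fun t : Fin p → ℝ => Matrix.of (fun i j : Fin p => x j ^ t i) i j)
        = fun t => Real.exp (Real.log (x j) * t i) := by
      funext t
      simp only [Matrix.of_apply]
      rw [Real.rpow_def_of_pos (hxp j)]
    rw [hrw]
    exact Real.continuous_exp.comp (continuous_const.mul (continuous_apply i))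
  have hconv : Convex ℝ {t : Fin p → ℝ | StrictMono t} := by
    intro t ht u hu a b ha hb hab
    intro i j hij
    simp only [Pi.add_apply, Pi.smul_apply, smul_eq_mul]
    have h1 := ht hij
    have h2 := hu hij
    rcases eq_or_lt_of_le ha with h | h
    · have hb1 : b = 1 := by linarith
      rw [← h, hb1]; simpa using h2
    · have := mul_lt_mul_of_pos_left h1 h
      have := mul_le_mul_of_nonneg_left h2.le hb
      linarith
  have hS : IsPreconnected {t : Fin p → ℝ | StrictMono t} := hconv.isPreconnected
  have ht0mem : (fun i : Fin p => ((i : ℕ) : ℝ)) ∈ {t : Fin p → ℝ | StrictMono t} := by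
    intro i j hij
    dsimp only
    exact_mod_cast (show (i : ℕ) < (j : ℕ) from hij)
  have ht1mem : (fun i : Fin p => ((e i : ℕ) : ℝ)) ∈ {t : Fin p → ℝ | StrictMono t} := by
    intro i j hij
    dsimp only
    exact_mod_cast he hij
  have hD0 : 0 < D (fun i => ((i : ℕ) : ℝ)) := by
    have hMeq : (Matrix.of fun i j : Fin p => x j ^ (((i : ℕ) : ℝ))) = (Matrix.vandermonde x)ᵀ := by
      ext i j
      simp [Matrix.vandermonde, Real.rpow_natCast]
    have h1 : D (fun i => ((i : ℕ) : ℝ)) = (Matrix.vandermonde x)ᵀ.det := by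
      rw [hD]; exact congrArg Matrix.det hMeq
    rw [h1, Matrix.det_transpose, Matrix.det_vandermonde]
    exact Finset.prod_pos fun i _ => Finset.prod_pos fun j hj =>
      sub_pos.mpr (hx (Finset.mem_Ioi.mp hj))
  have hD1eq : D (fun i => ((e i : ℕ) : ℝ)) = (Matrix.of fun i j : Fin p => x j ^ e i).det := by
    have hMeq : (Matrix.of fun i j : Fin p => x j ^ (((e i : ℕ) : ℝ)))
        = (Matrix.of fun i j : Fin p => x j ^ e i) := by
      ext i j
      simp [Real.rpow_natCast]
    rw [hD]; exact congrArg Matrix.det hMeq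
  have hD1lt : D (fun i => ((e i : ℕ) : ℝ)) < 0 := by
    rcases lt_or_eq_of_le hle with h | h
    · rwa [hD1eq]
    · exact absurd (hD1eq.trans h) (aux_det_ne_zero x hx hxp _ ht1mem)
  have h0mem : (0 : ℝ) ∈ Set.Icc (D fun i => ((e i : ℕ) : ℝ)) (D fun i => ((i : ℕ) : ℝ)) :=
    ⟨hD1lt.le, hD0.le⟩
  obtain ⟨t, hts, hDt⟩ := hS.intermediate_value ht1mem ht0mem hcont.continuousOn h0mem
  exact aux_det_ne_zero x hx hxp t hts hDt

/-- Expansion of `det (A * B)` by multilinearity over choice functions. -/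
lemma det_mul_expand {p r : ℕ} (A : Matrix (Fin p) (Fin r) ℝ) (B : Matrix (Fin r) (Fin p) ℝ) :
    (A * B).det = ∑ f : Fin p → Fin r, (∏ i, A i (f i)) * (B.submatrix f id).det := by
  have h1 : (A * B) = Matrix.of (fun i => ∑ k, A i k • B k) := by
    ext i j
    simp [Matrix.mul_apply, Finset.sum_apply]
  rw [h1]
  have h2 : (Matrix.of (fun i => ∑ k, A i k • B k)).det
      = (Matrix.detRowAlternating (R := ℝ) (n := Fin p)).toMultilinearMap
        (fun i => ∑ k, (A i k • B k)) := rfl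
  rw [h2, MultilinearMap.map_sum]
  refine Finset.sum_congr rfl fun f _ => ?_
  have h3 : (Matrix.detRowAlternating (R := ℝ) (n := Fin p)).toMultilinearMap
        (fun i => A i (f i) • B (f i))
      = (∏ i, A i (f i)) • (Matrix.detRowAlternating (R := ℝ) (n := Fin p)).toMultilinearMap
        (fun i => B (f i)) :=
    MultilinearMap.map_smul_univ _ _ _
  rw [h3, smul_eq_mul]
  rfl


section SortPair
variable {p r : ℕ}

/-- The image of an injective tuple, as a `p`-element subset. -/
noncomputable def sortS (f : Fin p → Fin r) (hf : Function.Injective f) :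
    {S : Finset (Fin r) // S.card = p} :=
  ⟨Finset.univ.image f, by
    rw [Finset.card_image_of_injective _ hf, Finset.card_univ, Fintype.card_fin]⟩

/-- The permutation sorting an injective tuple. -/
noncomputable def sortPerm (f : Fin p → Fin r) (hf : Function.Injective f) :
    Equiv.Perm (Fin p) :=
  Equiv.ofBijective
    (fun i => ((sortS f hf).1.orderIsoOfFin (sortS f hf).2).symm
      ⟨f i, by simp [sortS]⟩)
    ((Finite.injective_iff_bijective).mp (fun i j hij => hf (by
        have h2 := congrArg (fun z => (((sortS f hf).1.orderIsoOfFin (sortS f hf).2) z).val) hij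
        simpa using h2)))

lemma sortPair_spec (f : Fin p → Fin r) (hf : Function.Injective f) (i : Fin p) :
    (sortS f hf).1.orderEmbOfFin (sortS f hf).2 (sortPerm f hf i) = f i := by
  rw [← Finset.coe_orderIsoOfFin_apply]
  simp [sortPerm, Equiv.ofBijective_apply]

lemma sortS_eq (S : {S : Finset (Fin r) // S.card = p}) (σ : Equiv.Perm (Fin p))
    (hf : Function.Injective (fun i => S.1.orderEmbOfFin S.2 (σ i))) :
    sortS (fun i => S.1.orderEmbOfFin S.2 (σ i)) hf = S := by
  refine Subtype.ext ?_
  simp only [sortS]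
  ext k
  simp only [Finset.mem_image, Finset.mem_univ, true_and]
  constructor
  · rintro ⟨i, rfl⟩
    exact Finset.orderEmbOfFin_mem _ _ _
  · intro hk
    have : k ∈ Set.range (S.1.orderEmbOfFin S.2) := by
      rw [Finset.range_orderEmbOfFin]
      exact hk
    obtain ⟨i, hi⟩ := this
    exact ⟨σ.symm i, by simp [hi]⟩

lemma sortPerm_eq (S : {S : Finset (Fin r) // S.card = p}) (σ : Equiv.Perm (Fin p))
    (hf : Function.Injective (fun i => S.1.orderEmbOfFin S.2 (σ i))) :
    sortPerm (fun i => S.1.orderEmbOfFin S.2 (σ i)) hf = σ := by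
  have hS := sortS_eq S σ hf
  refine Equiv.ext fun i => ?_
  have hspec := sortPair_spec (fun i => S.1.orderEmbOfFin S.2 (σ i)) hf i
  rw [hS] at hspec
  exact (S.1.orderEmbOfFin S.2).injective hspec

end SortPair

/-- `det M = ∑ σ, sign σ * ∏ i, M i (σ i)`. -/
lemma det_eq_sum_perm {p : ℕ} (M : Matrix (Fin p) (Fin p) ℝ) :
    ∑ σ : Equiv.Perm (Fin p), ((Equiv.Perm.sign σ : ℤ) : ℝ) * ∏ i, M i (σ i) = M.det := by
  rw [← Matrix.det_transpose, Matrix.det_apply]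
  refine Finset.sum_congr rfl fun σ _ => ?_
  rw [Units.smul_def, zsmul_eq_mul]
  congr 1


/-- Cauchy–Binet-style expansion. -/
lemma det_mul_expand_mono {p r : ℕ} (A : Matrix (Fin p) (Fin r) ℝ)
    (B : Matrix (Fin r) (Fin p) ℝ) :
    (A * B).det = ∑ S : {S : Finset (Fin r) // S.card = p},
      (A.submatrix id (S.1.orderEmbOfFin S.2)).det
        * (B.submatrix (S.1.orderEmbOfFin S.2) id).det := by
  classical
  rw [det_mul_expand]
  rw [← Finset.sum_filter_add_sum_filter_not Finset.univ (fun f => Function.Injective f)]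
  have hnon : ∑ f ∈ Finset.univ.filter (fun f : Fin p → Fin r => ¬ Function.Injective f),
      (∏ i, A i (f i)) * (B.submatrix f id).det = 0 := by
    refine Finset.sum_eq_zero fun f hf => ?_
    simp only [Finset.mem_filter] at hf
    obtain ⟨i, j, hij, hne⟩ := Function.not_injective_iff.mp hf.2
    have hz : (B.submatrix f id).det = 0 :=
      Matrix.det_zero_of_row_eq hne (by funext k; simp [Matrix.submatrix, hij])
    rw [hz, mul_zero]
  rw [hnon, add_zero]
  have hbij : ∑ f ∈ Finset.univ.filter (fun f : Fin p → Fin r => Function.Injective f),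
      (∏ i, A i (f i)) * (B.submatrix f id).det
      = ∑ γ : {S : Finset (Fin r) // S.card = p} × Equiv.Perm (Fin p),
        (∏ i, A i (γ.1.1.orderEmbOfFin γ.1.2 (γ.2 i)))
          * (B.submatrix (fun i => γ.1.1.orderEmbOfFin γ.1.2 (γ.2 i)) id).det := by
    refine Finset.sum_bij'
      (i := fun f hf => (sortS f (Finset.mem_filter.mp hf).2, sortPerm f (Finset.mem_filter.mp hf).2))
      (j := fun γ _ => fun i => γ.1.1.orderEmbOfFin γ.1.2 (γ.2 i))
      (fun f hf => Finset.mem_univ _)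
      (fun γ _ => Finset.mem_filter.mpr ⟨Finset.mem_univ _,
        fun i j hij => γ.2.injective ((γ.1.1.orderEmbOfFin γ.1.2).injective hij)⟩)
      (fun f hf => funext fun i => sortPair_spec f (Finset.mem_filter.mp hf).2 i)
      (fun γ hγ => ?_)
      (fun f hf => ?_)
    · have hinj : Function.Injective (fun i => γ.1.1.orderEmbOfFin γ.1.2 (γ.2 i)) :=
        fun i j hij => γ.2.injective ((γ.1.1.orderEmbOfFin γ.1.2).injective hij)
      exact Prod.ext (sortS_eq γ.1 γ.2 hinj) (sortPerm_eq γ.1 γ.2 hinj)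
    · dsimp only
      simp only [sortPair_spec]
  rw [hbij, Fintype.sum_prod_type]
  refine Finset.sum_congr rfl fun S _ => ?_
  have hsub : ∀ σ : Equiv.Perm (Fin p),
      B.submatrix (fun i => S.1.orderEmbOfFin S.2 (σ i)) id
        = (B.submatrix (S.1.orderEmbOfFin S.2) id).submatrix σ id := fun σ => rfl
  calc ∑ σ : Equiv.Perm (Fin p), (∏ i, A i (S.1.orderEmbOfFin S.2 (σ i)))
        * (B.submatrix (fun i => S.1.orderEmbOfFin S.2 (σ i)) id).det
      = ∑ σ : Equiv.Perm (Fin p), (((Equiv.Perm.sign σ : ℤ) : ℝ)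
          * ∏ i, A i (S.1.orderEmbOfFin S.2 (σ i)))
          * (B.submatrix (S.1.orderEmbOfFin S.2) id).det := by
        refine Finset.sum_congr rfl fun σ _ => ?_
        rw [hsub σ, Matrix.det_permute]
        ring
    _ = (A.submatrix id (S.1.orderEmbOfFin S.2)).det
          * (B.submatrix (S.1.orderEmbOfFin S.2) id).det := by
        rw [← Finset.sum_mul]
        congr 1
        rw [← det_eq_sum_perm]
        rfl

/-- If `g(t) = ∑_{i=1}^r c_i λ_i^{t-1}` with `c_i > 0` and
`λ_1 > λ_2 > … > λ_r > 0` (here `g t` stands for `g(t+1)`), then the Hankel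
matrix `H(g)` is totally positive and has rank exactly `r`; moreover all its
minors of order at most `r` are strictly positive. -/
theorem hankel_of_positive_exponential_sum_totally_positive
    (r : ℕ) (c lam : Fin r → ℝ) (hc : ∀ i, 0 < c i)
    (hlam : StrictAnti lam) (hpos : ∀ i, 0 < lam i)
    (g : ℕ → ℝ) (hg : ∀ t : ℕ, g t = ∑ i, c i * lam i ^ t) :
    HankelTotallyPositive g ∧ HankelRankEq g r ∧
    (∀ p : ℕ, 1 ≤ p → p ≤ r → ∀ ρ κ : Fin p → ℕ, StrictMono ρ → StrictMono κ →
      0 < (hankelSub g ρ κ).det) := by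
  classical
  have hfact : ∀ (p : ℕ) (ρ κ : Fin p → ℕ), hankelSub g ρ κ =
      (Matrix.of fun i k => c k * lam k ^ ρ i) * (Matrix.of fun k j => lam k ^ κ j) := by
    intro p ρ κ
    ext i j
    simp only [hankelSub, Matrix.of_apply, Matrix.mul_apply, hg, pow_add]
    exact Finset.sum_congr rfl fun k _ => by ring
  have hrankle : ∀ (p : ℕ) (ρ κ : Fin p → ℕ), (hankelSub g ρ κ).rank ≤ r := by
    intro p ρ κ
    rw [hfact]
    exact le_trans (Matrix.rank_mul_le_left _ _)
      (le_trans (Matrix.rank_le_card_width _) (by simp))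
  have hpos3 : ∀ p : ℕ, p ≤ r → ∀ ρ κ : Fin p → ℕ, StrictMono ρ → StrictMono κ →
      0 < (hankelSub g ρ κ).det := by
    intro p hpr ρ κ hρ hκ
    rw [hfact, det_mul_expand_mono]
    haveI : Nonempty {S : Finset (Fin r) // S.card = p} := by
      obtain ⟨s, -, hcard⟩ := Finset.exists_subset_card_eq
        (show p ≤ (Finset.univ : Finset (Fin r)).card by simpa using hpr)
      exact ⟨⟨s, hcard⟩⟩
    refine Finset.sum_pos (fun S _ => ?_) Finset.univ_nonempty
    set e := S.1.orderEmbOfFin S.2 with he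
    have hemono : StrictMono e := (S.1.orderEmbOfFin S.2).strictMono
    set x : Fin p → ℝ := fun k => lam (e (Fin.rev k)) with hxdef
    have hx : StrictMono x := by
      intro k k' hkk
      exact hlam (hemono (Fin.rev_lt_rev.mpr hkk))
    have hxp : ∀ k, 0 < x k := fun k => hpos _
    have hVd : ∀ ε : Fin p → ℕ,
        (Matrix.of fun i k : Fin p => lam (e k) ^ ε i).det
          = ((Equiv.Perm.sign (Fin.revPerm : Equiv.Perm (Fin p)) : ℤ) : ℝ)
            * (Matrix.of fun i k : Fin p => x k ^ ε i).det := by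
      intro ε
      have heq : (Matrix.of fun i k : Fin p => lam (e k) ^ ε i)
          = (Matrix.of fun i k : Fin p => x k ^ ε i).submatrix id Fin.revPerm := by
        ext i k
        simp [hxdef, Fin.rev_rev]
      rw [heq, Matrix.det_permute']
    have hA : ((Matrix.of fun i k => c k * lam k ^ ρ i).submatrix id e).det
        = (∏ k, c (e k)) * (Matrix.of fun i k : Fin p => lam (e k) ^ ρ i).det := by
      have hrfl : (Matrix.of fun i k => c k * lam k ^ ρ i).submatrix id e
          = Matrix.of fun i j : Fin p =>
              (fun k => c (e k)) j * (Matrix.of fun i k : Fin p => lam (e k) ^ ρ i) i j := rfl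
      rw [hrfl, Matrix.det_mul_row]
    have hB : ((Matrix.of fun k j => lam k ^ κ j).submatrix e id).det
        = (Matrix.of fun j k : Fin p => lam (e k) ^ κ j).det := by
      rw [← Matrix.det_transpose ((Matrix.of fun k j => lam k ^ κ j).submatrix e id)]
      rfl
    rw [hA, hB, hVd ρ, hVd κ]
    set s : ℝ := ((Equiv.Perm.sign (Fin.revPerm : Equiv.Perm (Fin p)) : ℤ) : ℝ) with hsdef
    have hs : s * s = 1 := by
      rcases Int.units_eq_one_or (Equiv.Perm.sign (Fin.revPerm : Equiv.Perm (Fin p))) with h | h <;>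
        rw [hsdef, h] <;> norm_num
    have hPρ : 0 < (Matrix.of fun i k : Fin p => x k ^ ρ i).det := aux_det_pos x hx hxp ρ hρ
    have hPκ : 0 < (Matrix.of fun i k : Fin p => x k ^ κ i).det := aux_det_pos x hx hxp κ hκ
    have hprod : 0 < ∏ k, c (e k) := Finset.prod_pos fun k _ => hc _
    have hre : (∏ k, c (e k)) * (s * (Matrix.of fun i k : Fin p => x k ^ ρ i).det)
        * (s * (Matrix.of fun i k : Fin p => x k ^ κ i).det)
        = (s * s) * ((∏ k, c (e k)) * (Matrix.of fun i k : Fin p => x k ^ ρ i).det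
            * (Matrix.of fun i k : Fin p => x k ^ κ i).det) := by ring
    rw [hre, hs, one_mul]
    exact mul_pos (mul_pos hprod hPρ) hPκ
  -- total positivity
  have hTP : HankelTotallyPositive g := by
    intro p ρ κ hρ hκ
    rcases le_or_gt p r with h | h
    · exact (hpos3 p h ρ κ hρ hκ).le
    · have hz : (hankelSub g ρ κ).det = 0 := by
        by_contra h0
        have hu : IsUnit (hankelSub g ρ κ) :=
          (Matrix.isUnit_iff_isUnit_det _).mpr (isUnit_iff_ne_zero.mpr h0)
        have hr := Matrix.rank_of_isUnit _ hu
        rw [Fintype.card_fin] at hr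
        have := hrankle p ρ κ
        omega
      rw [hz]
  refine ⟨hTP, ⟨hrankle, ?_⟩, fun p _ hpr ρ κ hρ hκ => hpos3 p hpr ρ κ hρ hκ⟩
  refine ⟨fun i => (i : ℕ), fun i => (i : ℕ), ?_⟩
  have hmono : StrictMono (fun i : Fin r => (i : ℕ)) := fun i j hij => hij
  have hdet := (hpos3 r le_rfl _ _ hmono hmono).ne'
  have hu : IsUnit (hankelSub g (fun i : Fin r => (i : ℕ)) (fun i : Fin r => (i : ℕ))) :=
    (Matrix.isUnit_iff_isUnit_det _).mpr (isUnit_iff_ne_zero.mpr hdet)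
  rw [Matrix.rank_of_isUnit _ hu, Fintype.card_fin]
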